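/- Let d_S ≥ 2, let ρ_{SE} be a density matrix on ℂ^{d_S} ⊗ ℂ^{d_E} with reduced state ρ_S = Tr_E ρ_{SE}, and set χ = ‖ρ_S − I_S/d_S‖₁. If χ ≤ 1/d_S, then ρ_S is positive definite and for every Hermitian matrix H on ℂ^{d_S} ⊗ ℂ^{d_E}: |Tr(H·[log₂(ρ_S) ⊗ I_E, ρ_{SE}])| ≤ Δ(H)·d_S·χ, where Δ(H) = 2·min_{λ∈ℝ} ‖H − λ·I‖_∞. (That is, the entropy-rate bound holds with ‖H‖_∞ replaced by Δ(H)/2, since adding a multiple of the identity to H does not change the entropy rate.) -/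

import Mathlib

open scoped Kronecker ComplexOrder
open Matrix MeasureTheory

noncomputable section

/-- The trace norm `‖A‖₁ = Tr √(AᴴA)`. -/
def traceNorm {n : Type*} [Fintype n] [DecidableEq n] (A : Matrix n n ℂ) : ℝ :=
  (((Matrix.posSemidef_conjTranspose_mul_self A).1.eigenvectorUnitary.1 *
      diagonal ((fun r : ℝ => (r : ℂ)) ∘ (√·) ∘ (Matrix.posSemidef_conjTranspose_mul_self A).1.eigenvalues) *
      (star (Matrix.posSemidef_conjTranspose_mul_self A).1.eigenvectorUnitary : Matrix n n ℂ)).trace).re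

/-- The operator (spectral) norm `‖A‖_∞`. -/
def opNorm {n : Type*} [Fintype n] [DecidableEq n] (A : Matrix n n ℂ) : ℝ :=
  ‖Matrix.toEuclideanCLM (𝕜 := ℂ) A‖

/-- The partial trace over the second tensor factor. -/
def ptrace2 {m e : Type*} [Fintype e] (ρ : Matrix (m × e) (m × e) ℂ) : Matrix m m ℂ :=
  Matrix.of fun i j => ∑ k, ρ (i, k) (j, k)

/-- The binary logarithm `log₂` of a Hermitian matrix, via the spectral functional
calculus (junk value `0` on non-Hermitian input). -/
def matLog2 {n : Type*} [Fintype n] [DecidableEq n] (A : Matrix n n ℂ) : Matrix n n ℂ :=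
  if hA : A.IsHermitian then hA.cfc (Real.logb 2) else 0

/-- The commutator `[A, B] = A·B − B·A`. -/
def mcomm {n : Type*} [Fintype n] (A B : Matrix n n ℂ) : Matrix n n ℂ :=
  A * B - B * A

namespace EAux
variable {n : Type*} [Fintype n] [DecidableEq n]

def M (U : Matrix n n ℂ) (d : n → ℝ) : Matrix n n ℂ :=
  U * Matrix.diagonal (fun i => (d i : ℂ)) * Uᴴ

variable {U : Matrix n n ℂ}

lemma hU1 (hU : U ∈ Matrix.unitaryGroup n ℂ) : U * Uᴴ = 1 := by
  simpa [Matrix.star_eq_conjTranspose] using (Unitary.mem_iff.mp hU).2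

lemma hU2 (hU : U ∈ Matrix.unitaryGroup n ℂ) : Uᴴ * U = 1 := by
  simpa [Matrix.star_eq_conjTranspose] using (Unitary.mem_iff.mp hU).1

lemma M_mul (hU : U ∈ Matrix.unitaryGroup n ℂ) (d e : n → ℝ) :
    M U d * M U e = M U (fun i => d i * e i) := by
  have h : ∀ X : Matrix n n ℂ, Uᴴ * (U * X) = X := fun X => by
    rw [← Matrix.mul_assoc, hU2 hU, Matrix.one_mul]
  simp only [M, Matrix.mul_assoc]
  rw [h, ← Matrix.mul_assoc (Matrix.diagonal _), Matrix.diagonal_mul_diagonal]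
  congr 2
  ext i
  push_cast
  ring

lemma M_conjT (d : n → ℝ) : (M U d)ᴴ = M U d := by
  simp only [M, Matrix.conjTranspose_mul, Matrix.conjTranspose_conjTranspose,
    Matrix.diagonal_conjTranspose, Matrix.mul_assoc]
  congr 2
  ext i j
  simp [Matrix.diagonal_apply, Pi.star_def, Complex.conj_ofReal]

lemma M_trace (hU : U ∈ Matrix.unitaryGroup n ℂ) (d : n → ℝ) :
    (M U d).trace = ∑ i, (d i : ℂ) := by
  rw [M, Matrix.trace_mul_cycle, hU2 hU, Matrix.one_mul, Matrix.trace_diagonal]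

lemma M_posSemidef (hU : U ∈ Matrix.unitaryGroup n ℂ) {d : n → ℝ} (hd : ∀ i, 0 ≤ d i) :
    (M U d).PosSemidef := by
  have h : M U d = (M U fun i => Real.sqrt (d i))ᴴ * (M U fun i => Real.sqrt (d i)) := by
    have hfe : (fun i => Real.sqrt (d i) * Real.sqrt (d i)) = d :=
      funext fun i => Real.mul_self_sqrt (hd i)
    rw [M_conjT, M_mul hU, hfe]
  rw [h]
  exact Matrix.posSemidef_conjTranspose_mul_self _

lemma M_traceNorm (hU : U ∈ Matrix.unitaryGroup n ℂ) (d : n → ℝ) :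
    traceNorm (M U d) = ∑ i, |d i| := by
  have hP := (Matrix.posSemidef_conjTranspose_mul_self (M U d)).1
  have hsq : (M U d)ᴴ * M U d = M U (fun i => d i * d i) := by rw [M_conjT, M_mul hU]
  have hch : ((M U d)ᴴ * M U d).charpoly
      = ∏ i, (Polynomial.X - Polynomial.C (((d i * d i : ℝ)) : ℂ)) := by
    rw [hsq, M, Matrix.charpoly_mul_comm, ← Matrix.mul_assoc, hU2 hU, Matrix.one_mul,
      Matrix.charpoly_diagonal]
  have hroots : Multiset.map (RCLike.ofReal ∘ hP.eigenvalues) Finset.univ.val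
      = Multiset.map (fun i => ((d i * d i : ℝ) : ℂ)) Finset.univ.val := by
    rw [← hP.roots_charpoly_eq_eigenvalues, hch, Polynomial.roots_prod]
    · simp only [Polynomial.roots_X_sub_C, Multiset.bind_singleton]
    · exact Finset.prod_ne_zero_iff.mpr fun i _ => Polynomial.X_sub_C_ne_zero _
  have key := congrArg (fun s => (Multiset.map (fun z : ℂ => Real.sqrt z.re) s).sum) hroots
  simp only [Multiset.map_map, Function.comp_def] at key
  have e1 : traceNorm (M U d) = ∑ i, Real.sqrt (hP.eigenvalues i) := by
    rw [traceNorm, Matrix.trace_mul_cycle, Unitary.star_mul_self_of_mem hP.eigenvectorUnitary.2,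
      Matrix.one_mul, Matrix.trace_diagonal, Complex.re_sum]
    simp
  rw [e1, Finset.sum_eq_multiset_sum, Finset.sum_eq_multiset_sum]
  convert key using 2 <;> simp [Real.sqrt_mul_self_eq_abs]

lemma opNorm_mul_le (A B : Matrix n n ℂ) : opNorm (A * B) ≤ opNorm A * opNorm B := by
  simp only [opNorm, _root_.map_mul]; exact norm_mul_le _ _

lemma opNorm_sub_le (A B : Matrix n n ℂ) : opNorm (A - B) ≤ opNorm A + opNorm B := by
  simp only [opNorm, map_sub]; exact norm_sub_le _ _

lemma opNorm_unitary (hU : U ∈ Matrix.unitaryGroup n ℂ) : opNorm U ≤ 1 := by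
  have h : star (Matrix.toEuclideanCLM (𝕜 := ℂ) U) * Matrix.toEuclideanCLM (𝕜 := ℂ) U = 1 := by
    rw [← map_star, ← _root_.map_mul, (Unitary.mem_iff.mp hU).1, _root_.map_one]
  have h2 := CStarRing.norm_star_mul_self (x := Matrix.toEuclideanCLM (𝕜 := ℂ) U)
  rw [h] at h2
  have h3 : ‖(1 : EuclideanSpace ℂ n →L[ℂ] EuclideanSpace ℂ n)‖ ≤ 1 := by
    rw [ContinuousLinearMap.one_def]; exact ContinuousLinearMap.norm_id_le
  rw [h2] at h3
  rw [opNorm]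
  nlinarith [norm_nonneg (Matrix.toEuclideanCLM (𝕜 := ℂ) U)]

lemma opNorm_diagonal_le (v : n → ℂ) {c : ℝ} (hc : 0 ≤ c) (hv : ∀ i, ‖v i‖ ≤ c) :
    opNorm (Matrix.diagonal v) ≤ c := by
  rw [opNorm]
  refine ContinuousLinearMap.opNorm_le_bound _ hc fun x => ?_
  have hcoord : ∀ i, (Matrix.toEuclideanCLM (𝕜 := ℂ) (Matrix.diagonal v) x) i = v i * x i := by
    intro i
    have h0 : (Matrix.toEuclideanCLM (𝕜 := ℂ) (Matrix.diagonal v) x) i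
        = ((Matrix.diagonal v).mulVec (fun j => x j)) i := rfl
    rw [h0, Matrix.mulVec_diagonal]
  rw [EuclideanSpace.norm_eq, EuclideanSpace.norm_eq]
  rw [← Real.sqrt_sq hc, ← Real.sqrt_mul (sq_nonneg c)]
  apply Real.sqrt_le_sqrt
  rw [Finset.mul_sum]
  apply Finset.sum_le_sum
  intro i _
  rw [hcoord i, norm_mul]
  have h1 := hv i
  have h2 : (0:ℝ) ≤ ‖x i‖ := norm_nonneg _
  have h3 : (0:ℝ) ≤ ‖v i‖ := norm_nonneg _
  nlinarith [mul_le_mul_of_nonneg_right h1 h2, mul_nonneg h3 h2]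

lemma M_opNorm (hU : U ∈ Matrix.unitaryGroup n ℂ) {d : n → ℝ} {c : ℝ} (hc : 0 ≤ c)
    (hd : ∀ i, |d i| ≤ c) : opNorm (M U d) ≤ c := by
  have h1 : opNorm (M U d) ≤ opNorm (U * Matrix.diagonal (fun i => (d i : ℂ))) * opNorm Uᴴ :=
    opNorm_mul_le _ _
  have h2 : opNorm (U * Matrix.diagonal (fun i => (d i : ℂ)))
      ≤ opNorm U * opNorm (Matrix.diagonal (fun i => (d i : ℂ))) := opNorm_mul_le _ _
  have h3 : opNorm U ≤ 1 := opNorm_unitary hU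
  have h4 : opNorm Uᴴ ≤ 1 := by
    refine opNorm_unitary (U := Uᴴ) ?_
    rw [← Matrix.star_eq_conjTranspose]
    exact Unitary.star_mem hU
  have h5 : opNorm (Matrix.diagonal (fun i => (d i : ℂ))) ≤ c :=
    opNorm_diagonal_le _ hc (fun i => by simpa using hd i)
  have n1 : (0:ℝ) ≤ opNorm U := norm_nonneg _
  have n2 : (0:ℝ) ≤ opNorm Uᴴ := norm_nonneg _
  have n3 : (0:ℝ) ≤ opNorm (Matrix.diagonal (fun i => (d i : ℂ))) := norm_nonneg _
  have n4 : (0:ℝ) ≤ opNorm (U * Matrix.diagonal (fun i => (d i : ℂ))) := norm_nonneg _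
  nlinarith

lemma M_spectral {Z : Matrix n n ℂ} (hZ : Z.IsHermitian) :
    Z = M (hZ.eigenvectorUnitary : Matrix n n ℂ) hZ.eigenvalues := by
  conv_lhs => rw [hZ.spectral_theorem]
  rfl

lemma diag_entry_bound (X : Matrix n n ℂ) (hU : U ∈ Matrix.unitaryGroup n ℂ) (i : n) :
    ‖(Uᴴ * X * U) i i‖ ≤ opNorm X := by
  set u : n → ℂ := fun k => U k i with hu
  set e : EuclideanSpace ℂ n := (WithLp.equiv 2 _).symm u with he
  have hnorm : ∑ k, ‖u k‖ ^ 2 = 1 := by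
    have h1 : (Uᴴ * U) i i = 1 := by rw [hU2 hU, Matrix.one_apply_eq]
    have h2 : (Uᴴ * U) i i = ∑ k, (starRingEnd ℂ) (U k i) * U k i := by
      simp [Matrix.mul_apply, Matrix.conjTranspose_apply]
    have h3 : ∑ k, ((‖u k‖ ^ 2 : ℝ) : ℂ) = 1 := by
      rw [← h1, h2]
      refine Finset.sum_congr rfl fun k _ => ?_
      rw [hu]
      rw [mul_comm, Complex.mul_conj, Complex.normSq_eq_norm_sq]
    exact_mod_cast h3
  have he2 : ‖e‖ = 1 := by
    rw [EuclideanSpace.norm_eq]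
    have : ∀ k, ‖e k‖ = ‖u k‖ := fun k => rfl
    simp only [this, hnorm, Real.sqrt_one]
  have hinner : (Uᴴ * X * U) i i
      = inner ℂ e (Matrix.toEuclideanCLM (𝕜 := ℂ) X e) := by
    rw [EuclideanSpace.inner_eq_star_dotProduct]
    have h0 : WithLp.ofLp (Matrix.toEuclideanCLM (𝕜 := ℂ) X e) = X.mulVec u := rfl
    have h1 : WithLp.ofLp e = u := rfl
    rw [h0, h1]
    simp only [dotProduct, Matrix.mul_apply, Matrix.mulVec, Matrix.conjTranspose_apply,
      Pi.star_apply, dotProduct, Finset.sum_mul, Finset.mul_sum]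
    rw [Finset.sum_comm]
    refine Finset.sum_congr rfl fun k _ => Finset.sum_congr rfl fun j _ => ?_
    rw [hu]
    simp [RCLike.star_def]
    ring
  rw [hinner]
  calc ‖(inner ℂ e (Matrix.toEuclideanCLM (𝕜 := ℂ) X e) : ℂ)‖
      ≤ ‖e‖ * ‖Matrix.toEuclideanCLM (𝕜 := ℂ) X e‖ := norm_inner_le_norm _ _
    _ ≤ ‖e‖ * (‖Matrix.toEuclideanCLM (𝕜 := ℂ) X‖ * ‖e‖) := by
        refine mul_le_mul_of_nonneg_left ?_ (norm_nonneg _)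
        exact ContinuousLinearMap.le_opNorm _ _
    _ = opNorm X := by rw [he2, opNorm]; ring

lemma trace_M_mul (hU : U ∈ Matrix.unitaryGroup n ℂ) (X : Matrix n n ℂ) (d : n → ℝ) :
    (X * M U d).trace = ∑ i, (Uᴴ * X * U) i i * (d i : ℂ) := by
  have h : X * M U d = X * U * Matrix.diagonal (fun i => (d i : ℂ)) * Uᴴ := by
    simp only [M, Matrix.mul_assoc]
  rw [h, Matrix.trace_mul_comm]
  have h2 : Uᴴ * (X * U * Matrix.diagonal fun i => (d i : ℂ))
      = (Uᴴ * X * U) * Matrix.diagonal (fun i => (d i : ℂ)) := by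
    simp only [Matrix.mul_assoc]
  rw [h2, Matrix.trace]
  refine Finset.sum_congr rfl fun i _ => ?_
  simp [Matrix.diag, Matrix.mul_apply, Matrix.diagonal_apply]

lemma holder_M (hU : U ∈ Matrix.unitaryGroup n ℂ) (X : Matrix n n ℂ) (d : n → ℝ) :
    ‖(X * M U d).trace‖ ≤ opNorm X * ∑ i, |d i| := by
  rw [trace_M_mul hU]
  calc ‖∑ i, (Uᴴ * X * U) i i * (d i : ℂ)‖
      ≤ ∑ i, ‖(Uᴴ * X * U) i i * (d i : ℂ)‖ :=
        norm_sum_le _ _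
    _ ≤ ∑ i, opNorm X * |d i| := by
        refine Finset.sum_le_sum fun i _ => ?_
        rw [norm_mul, Complex.norm_real, Real.norm_eq_abs]
        exact mul_le_mul_of_nonneg_right (diag_entry_bound X hU i) (abs_nonneg _)
    _ = opNorm X * ∑ i, |d i| := by rw [Finset.mul_sum]

lemma holder (X Z : Matrix n n ℂ) (hZ : Z.IsHermitian) :
    ‖(X * Z).trace‖ ≤ opNorm X * traceNorm Z := by
  have hU : (hZ.eigenvectorUnitary : Matrix n n ℂ) ∈ Matrix.unitaryGroup n ℂ :=
    hZ.eigenvectorUnitary.2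
  calc ‖(X * Z).trace‖
      ≤ opNorm X * ∑ i, |hZ.eigenvalues i| := by
        conv_lhs => rw [M_spectral hZ]
        exact holder_M hU X _
    _ = opNorm X * traceNorm Z := by
        conv_rhs => rw [M_spectral hZ]
        rw [M_traceNorm hU]

lemma traceNorm_of_herm {Z : Matrix n n ℂ} (hZ : Z.IsHermitian) : traceNorm Z = ∑ i, |hZ.eigenvalues i| := by
  conv_lhs => rw [M_spectral hZ]
  exact M_traceNorm hZ.eigenvectorUnitary.2 _

lemma traceNorm_nonneg_herm {Z : Matrix n n ℂ} (hZ : Z.IsHermitian) : 0 ≤ traceNorm Z := by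
  rw [traceNorm_of_herm hZ]
  positivity

lemma traceNorm_psd {A : Matrix n n ℂ} (hA : A.PosSemidef) : traceNorm A = A.trace.re := by
  rw [traceNorm_of_herm hA.1]
  have h : ∀ i, |hA.1.eigenvalues i| = hA.1.eigenvalues i := fun i =>
    abs_of_nonneg (hA.eigenvalues_nonneg i)
  simp only [h]
  have h2 := M_trace hA.1.eigenvectorUnitary.2 hA.1.eigenvalues
  rw [← M_spectral hA.1] at h2
  rw [h2]
  have h3 : ∑ i, ((hA.1.eigenvalues i : ℝ) : ℂ) = ((∑ i, hA.1.eigenvalues i : ℝ) : ℂ) := by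
    push_cast; rfl
  rw [h3, Complex.ofReal_re]

lemma traceNorm_comm_le {A Hm : Matrix n n ℂ} (hA : A.PosSemidef) (htr : A.trace = 1)
    (hHm : Hm.IsHermitian) :
    traceNorm (Complex.I • (A * Hm - Hm * A)) ≤ 2 * opNorm Hm := by
  set Z := Complex.I • (A * Hm - Hm * A) with hZdef
  have hZ : Z.IsHermitian := by
    rw [Matrix.IsHermitian, hZdef, Matrix.conjTranspose_smul, Matrix.conjTranspose_sub,
      Matrix.conjTranspose_mul, Matrix.conjTranspose_mul, hA.1, hHm]
    simp only [RCLike.star_def, Complex.conj_I, neg_smul, smul_sub, neg_sub]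
    abel
  set UZ := (hZ.eigenvectorUnitary : Matrix n n ℂ) with hUZdef
  have hUZ : UZ ∈ Matrix.unitaryGroup n ℂ := hZ.eigenvectorUnitary.2
  set ζ := hZ.eigenvalues with hζdef
  set s : n → ℝ := fun i => if ζ i < 0 then -1 else 1 with hsdef
  have hZS : Z * M UZ s = M UZ (fun i => |ζ i|) := by
    conv_lhs => rw [M_spectral hZ]
    rw [M_mul hUZ]
    refine congrArg (M UZ) (funext fun i => ?_)
    by_cases h : ζ i < 0
    · simp only [hsdef, if_pos h]
      rw [abs_of_neg h]; ring
    · simp only [hsdef, if_neg h]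
      rw [abs_of_nonneg (not_lt.mp h)]; ring
  have htraceZS : (Z * M UZ s).trace = ((traceNorm Z : ℝ) : ℂ) := by
    rw [hZS, M_trace hUZ, traceNorm_of_herm hZ]
    push_cast
    rfl
  have hW : (Z * M UZ s).trace = Complex.I * (((Hm * M UZ s - M UZ s * Hm) * A).trace) := by
    conv_lhs => rw [hZdef]
    rw [Matrix.smul_mul, Matrix.trace_smul, Matrix.sub_mul, Matrix.trace_sub]
    have e1 : (A * Hm * M UZ s).trace = (Hm * M UZ s * A).trace := by
      conv_lhs => rw [Matrix.trace_mul_cycle]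
      conv_lhs => rw [Matrix.trace_mul_cycle]
    have e2 : (Hm * A * M UZ s).trace = (M UZ s * Hm * A).trace := by
      conv_lhs => rw [Matrix.trace_mul_cycle]
    rw [e1, e2, Matrix.sub_mul, Matrix.trace_sub, smul_eq_mul]
  have hS : opNorm (M UZ s) ≤ 1 := by
    refine M_opNorm hUZ zero_le_one fun i => ?_
    by_cases h : ζ i < 0 <;> simp [hsdef, h]
  have habs : traceNorm Z = ‖((Hm * M UZ s - M UZ s * Hm) * A).trace‖ := by
    have h1 : ‖(Z * M UZ s).trace‖ = traceNorm Z := by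
      rw [htraceZS, Complex.norm_real, Real.norm_eq_abs, abs_of_nonneg (traceNorm_nonneg_herm hZ)]
    rw [← h1, hW, norm_mul, Complex.norm_I, one_mul]
  rw [habs]
  calc ‖((Hm * M UZ s - M UZ s * Hm) * A).trace‖
      ≤ opNorm (Hm * M UZ s - M UZ s * Hm) * traceNorm A := holder _ _ hA.1
    _ = opNorm (Hm * M UZ s - M UZ s * Hm) := by
        rw [traceNorm_psd hA, htr]
        simp
    _ ≤ 2 * opNorm Hm := by
        have h1 := opNorm_sub_le (Hm * M UZ s) (M UZ s * Hm)
        have h2 := opNorm_mul_le Hm (M UZ s)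
        have h3 := opNorm_mul_le (M UZ s) Hm
        have n1 : (0:ℝ) ≤ opNorm Hm := norm_nonneg _
        have n2 : (0:ℝ) ≤ opNorm (M UZ s) := norm_nonneg _
        nlinarith

lemma M_sub (d e : n → ℝ) : M U d - M U e = M U (fun i => d i - e i) := by
  simp only [M]
  rw [← Matrix.sub_mul, ← Matrix.mul_sub]
  have h : (Matrix.diagonal fun i => ((d i : ℂ))) - (Matrix.diagonal fun i => ((e i : ℂ)))
      = Matrix.diagonal fun i => ((d i - e i : ℝ) : ℂ) := by
    rw [Matrix.diagonal_sub]
    refine congrArg Matrix.diagonal (funext fun i => ?_)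
    push_cast
    ring
  rw [h]

lemma M_add (d e : n → ℝ) : M U d + M U e = M U (fun i => d i + e i) := by
  simp only [M]
  rw [← Matrix.add_mul, ← Matrix.mul_add]
  have h : (Matrix.diagonal fun i => ((d i : ℂ))) + (Matrix.diagonal fun i => ((e i : ℂ)))
      = Matrix.diagonal fun i => ((d i + e i : ℝ) : ℂ) := by
    rw [Matrix.diagonal_add]
    refine congrArg Matrix.diagonal (funext fun i => ?_)
    push_cast
    ring
  rw [h]

lemma M_const (hU : U ∈ Matrix.unitaryGroup n ℂ) (c : ℝ) :
    M U (fun _ => c) = (c : ℂ) • 1 := by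
  have h : Matrix.diagonal (fun _ : n => (c : ℂ)) = (c : ℂ) • 1 := by
    rw [← Matrix.diagonal_one, ← Matrix.diagonal_smul]
    refine congrArg Matrix.diagonal (funext fun i => ?_)
    simp
  rw [M, h, Matrix.mul_smul, Matrix.mul_one, Matrix.smul_mul, hU1 hU]

section Kron
variable {e : Type*} [Fintype e] [DecidableEq e]

lemma kron_conjT (A : Matrix n n ℂ) (B : Matrix e e ℂ) : (A ⊗ₖ B)ᴴ = Aᴴ ⊗ₖ Bᴴ := by
  ext ⟨i, k⟩ ⟨j, l⟩
  simp [Matrix.conjTranspose_apply, Matrix.kroneckerMap_apply, mul_comm]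

lemma kron_sub (A B : Matrix n n ℂ) (C : Matrix e e ℂ) :
    (A - B) ⊗ₖ C = A ⊗ₖ C - B ⊗ₖ C := by
  ext ⟨i, k⟩ ⟨j, l⟩
  simp [Matrix.kroneckerMap_apply, sub_mul]

lemma kron_unitary {V : Matrix e e ℂ} (hU : U ∈ Matrix.unitaryGroup n ℂ)
    (hV : V ∈ Matrix.unitaryGroup e ℂ) : U ⊗ₖ V ∈ Matrix.unitaryGroup (n × e) ℂ := by
  rw [Unitary.mem_iff]
  constructor
  · rw [Matrix.star_eq_conjTranspose, kron_conjT, ← Matrix.mul_kronecker_mul,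
      hU2 hU, hU2 hV, Matrix.one_kronecker_one]
  · rw [Matrix.star_eq_conjTranspose, kron_conjT, ← Matrix.mul_kronecker_mul,
      hU1 hU, hU1 hV, Matrix.one_kronecker_one]

lemma one_unitary : (1 : Matrix e e ℂ) ∈ Matrix.unitaryGroup e ℂ := by
  rw [Unitary.mem_iff]
  simp

lemma M_kron (U : Matrix n n ℂ) (d : n → ℝ) :
    (M U d) ⊗ₖ (1 : Matrix e e ℂ) = M (U ⊗ₖ (1 : Matrix e e ℂ)) (fun p => d p.1) := by
  have h1 : (1 : Matrix e e ℂ) = 1 * 1 * (1 : Matrix e e ℂ)ᴴ := by simp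
  rw [M]
  conv_lhs => rw [h1]
  rw [Matrix.mul_kronecker_mul, Matrix.mul_kronecker_mul, ← kron_conjT]
  rw [M]
  congr 1
  congr 1
  rw [← Matrix.diagonal_one, Matrix.diagonal_kronecker_diagonal]
  refine congrArg Matrix.diagonal (funext fun p => ?_)
  simp

end Kron


section Ptrace
variable {m e : Type*} [Fintype m] [Fintype e] [DecidableEq m] [DecidableEq e]

lemma ptrace2_trace (ρ : Matrix (m × e) (m × e) ℂ) : (ptrace2 ρ).trace = ρ.trace := by
  simp [ptrace2, Matrix.trace, Matrix.diag, Fintype.sum_prod_type]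

lemma ptrace2_posSemidef {ρ : Matrix (m × e) (m × e) ℂ} (hρ : ρ.PosSemidef) :
    (ptrace2 ρ).PosSemidef := by
  refine Matrix.PosSemidef.of_dotProduct_mulVec_nonneg ?_ ?_
  · ext i j
    simp only [ptrace2, Matrix.conjTranspose_apply, Matrix.of_apply, star_sum]
    refine Finset.sum_congr rfl fun k _ => ?_
    exact congrFun (congrFun hρ.1 (i, k)) (j, k)
  · intro x
    set y : e → (m × e) → ℂ := fun k p => if p.2 = k then x p.1 else 0 with hy
    have hR : ∀ k, dotProduct (star (y k)) (ρ *ᵥ y k)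
        = ∑ i, ∑ j, star (x i) * ρ (i, k) (j, k) * x j := by
      intro k
      simp only [dotProduct, Matrix.mulVec, Pi.star_apply, hy, Fintype.sum_prod_type,
        apply_ite (star : ℂ → ℂ), star_zero, ite_mul, zero_mul, mul_ite, mul_zero,
        Finset.sum_ite_irrel, Finset.sum_const_zero,
        Finset.sum_ite_eq', Finset.mem_univ, if_true, Finset.mul_sum]
      refine Finset.sum_congr rfl fun i _ => Finset.sum_congr rfl fun j _ => ?_
      ring
    have hL : dotProduct (star x) ((ptrace2 ρ) *ᵥ x)
        = ∑ i, ∑ j, ∑ k, star (x i) * ρ (i, k) (j, k) * x j := by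
      simp only [dotProduct, Matrix.mulVec, Pi.star_apply, ptrace2, Matrix.of_apply,
        Finset.sum_mul, Finset.mul_sum]
      refine Finset.sum_congr rfl fun i _ => Finset.sum_congr rfl fun j _ =>
        Finset.sum_congr rfl fun k _ => ?_
      ring
    have hswap : ∑ i, ∑ j, ∑ k, star (x i) * ρ (i, k) (j, k) * x j
        = ∑ k, ∑ i, ∑ j, star (x i) * ρ (i, k) (j, k) * x j := by
      have h1 : ∀ i : m, ∑ j, ∑ k, star (x i) * ρ (i, k) (j, k) * x j
          = ∑ k, ∑ j, star (x i) * ρ (i, k) (j, k) * x j := fun i => Finset.sum_comm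
      simp only [h1]
      exact Finset.sum_comm
    have key : dotProduct (star x) ((ptrace2 ρ) *ᵥ x)
        = ∑ k, dotProduct (star (y k)) (ρ *ᵥ y k) := by
      rw [hL, hswap]
      exact Finset.sum_congr rfl fun k _ => (hR k).symm
    rw [key]
    exact Finset.sum_nonneg fun k _ => hρ.dotProduct_mulVec_nonneg _

end Ptrace
lemma logb_bound {t : ℝ} (ht : |t| ≤ 1/2) : |Real.logb 2 (1 + t)| ≤ 2 * |t| := by
  have hlog2 : 0 < Real.log 2 := Real.log_pos one_lt_two
  have hlog4 : Real.log 4 = 2 * Real.log 2 := by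
    rw [show (4:ℝ) = 2^2 by norm_num, Real.log_pow]
    push_cast; ring
  have h4 : 1 ≤ Real.log 4 := by
    rw [Real.le_log_iff_exp_le (by norm_num : (0:ℝ) < 4)]
    calc Real.exp 1 ≤ 2.7182818286 := le_of_lt Real.exp_one_lt_d9
      _ ≤ 4 := by norm_num
  have habs := abs_le.mp ht
  have key : |Real.log (1 + t)| ≤ |t| * Real.log 4 := by
    rcases le_or_gt 0 t with h | h
    · have hpos : (0:ℝ) < 1 + t := by linarith
      have h1 : Real.log (1 + t) ≤ t := by
        have := Real.log_le_sub_one_of_pos hpos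
        linarith
      have h2 : 0 ≤ Real.log (1 + t) := Real.log_nonneg (by linarith)
      rw [abs_of_nonneg h2, abs_of_nonneg h]
      nlinarith
    · set s := -t with hs
      have hs1 : 0 < s := by simp [hs]; linarith
      have hs2 : s ≤ 1/2 := by simp [hs]; linarith
      have hc := (strictConcaveOn_log_Ioi.concaveOn).2 (Set.mem_Ioi.mpr one_pos)
        (Set.mem_Ioi.mpr (by norm_num : (0:ℝ) < 1/2)) (by linarith : (0:ℝ) ≤ 1 - 2*s)
        (by linarith : (0:ℝ) ≤ 2*s) (by ring)
      rw [Real.log_one] at hc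
      have harg : (1 - 2*s) • (1:ℝ) + (2*s) • (1/2:ℝ) = 1 - s := by
        simp only [smul_eq_mul]; ring
      rw [harg] at hc
      have hhalf : Real.log (1/2) = -Real.log 2 := by
        rw [one_div, Real.log_inv]
      have hlow : -(2*s) * Real.log 2 ≤ Real.log (1 - s) := by
        have : (1 - 2*s) • (0:ℝ) + (2*s) • Real.log (1/2) ≤ Real.log (1 - s) := hc
        simp only [smul_eq_mul, mul_zero, zero_add, hhalf] at this
        linarith
      have hneg : Real.log (1 - s) ≤ 0 := Real.log_nonpos (by linarith) (by linarith)
      have h1t : 1 + t = 1 - s := by simp [hs]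
      rw [h1t, abs_of_nonpos hneg, abs_of_neg h]
      rw [hlog4]
      nlinarith
  rw [Real.logb, abs_div, abs_of_pos hlog2, div_le_iff₀ hlog2]
  calc |Real.log (1+t)| ≤ |t| * Real.log 4 := key
    _ = 2 * |t| * Real.log 2 := by rw [hlog4]; ring

lemma trace_rearrange (Hm X ρ : Matrix n n ℂ) (a b : ℂ) :
    Matrix.trace (Hm * mcomm X ρ)
      = Matrix.trace ((X - b • 1) * (ρ * (Hm - a • 1) - (Hm - a • 1) * ρ)) := by
  have e1 : Matrix.trace (X * (ρ * Hm)) = Matrix.trace (Hm * (X * ρ)) := by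
    rw [← Matrix.mul_assoc, Matrix.trace_mul_comm]
  have e2 : Matrix.trace (X * (Hm * ρ)) = Matrix.trace (Hm * (ρ * X)) := by
    rw [← Matrix.mul_assoc, Matrix.trace_mul_comm (X * Hm) ρ, ← Matrix.mul_assoc,
      Matrix.trace_mul_comm]
  have e4 : Matrix.trace (ρ * Hm) = Matrix.trace (Hm * ρ) := Matrix.trace_mul_comm _ _
  simp only [mcomm, Matrix.mul_sub, Matrix.sub_mul, Matrix.trace_sub, Matrix.smul_mul,
    Matrix.mul_smul, Matrix.trace_smul, Matrix.one_mul, Matrix.mul_one, smul_eq_mul,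
    Matrix.mul_assoc]
  linear_combination (-1 : ℂ) * e1 + e2 + b * e4

end EAux

/-- Under the hypotheses of Statement 4, the entropy-rate bound holds
with `‖H‖_∞` replaced by `Δ(H)/2`, where `Δ(H) = 2·min_{λ∈ℝ} ‖H − λ·I‖_∞`: the entropy
rate is at most `Δ(H)·d_S·χ`. -/
theorem close_to_mixed_implies_pretty_lazy_interaction_strength {dS dE : ℕ} (hdS : 2 ≤ dS)
    (ρSE : Matrix (Fin dS × Fin dE) (Fin dS × Fin dE) ℂ)
    (hρ : ρSE.PosSemidef) (htr : ρSE.trace = 1) (χ : ℝ)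
    (hχ : χ = traceNorm (ptrace2 ρSE - (dS : ℂ)⁻¹ • (1 : Matrix (Fin dS) (Fin dS) ℂ)))
    (hsmall : χ ≤ 1 / (dS : ℝ)) :
    (ptrace2 ρSE).PosDef ∧
      ∀ H : Matrix (Fin dS × Fin dE) (Fin dS × Fin dE) ℂ, H.IsHermitian →
        ‖Matrix.trace (H *
            mcomm (matLog2 (ptrace2 ρSE) ⊗ₖ (1 : Matrix (Fin dE) (Fin dE) ℂ)) ρSE)‖ ≤
          (2 * ⨅ l : ℝ, opNorm (H - (l : ℂ) •
              (1 : Matrix (Fin dS × Fin dE) (Fin dS × Fin dE) ℂ))) * (dS : ℝ) * χ := by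
  have hdS0 : (0:ℝ) < (dS:ℝ) := by
    have h : (0:ℕ) < dS := lt_of_lt_of_le (by norm_num) hdS
    exact_mod_cast h
  rcases Nat.eq_zero_or_pos dE with hdE | _
  · exfalso
    subst hdE
    haveI : IsEmpty (Fin dS × Fin 0) := by
      refine ⟨fun p => ?_⟩
      exact absurd p.2.2 (by simp)
    have h0 : ρSE.trace = 0 := by simp [Matrix.trace]
    rw [h0] at htr
    exact zero_ne_one htr
  set ρS := ptrace2 ρSE with hρSdef
  have hρS : ρS.PosSemidef := EAux.ptrace2_posSemidef hρ
  have hher : ρS.IsHermitian := hρS.1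
  set U := (hher.eigenvectorUnitary : Matrix (Fin dS) (Fin dS) ℂ) with hUdef
  have hU : U ∈ Matrix.unitaryGroup (Fin dS) ℂ := hher.eigenvectorUnitary.2
  set μ := hher.eigenvalues with hμdef
  have hspec : ρS = EAux.M U μ := EAux.M_spectral hher
  have htrS : ρS.trace = 1 := by rw [hρSdef, EAux.ptrace2_trace, htr]
  have hsum : ∑ i, μ i = 1 := by
    have h1 := EAux.M_trace hU μ
    rw [← hspec, htrS] at h1
    have h2 : ((∑ i, μ i : ℝ) : ℂ) = 1 := by push_cast; rw [← h1]
    exact_mod_cast h2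
  set δ : Fin dS → ℝ := fun i => μ i - (dS:ℝ)⁻¹ with hδdef
  have hD : ρS - (dS:ℂ)⁻¹ • 1 = EAux.M U δ := by
    have hc : (((dS:ℝ)⁻¹ : ℝ) : ℂ) = (dS:ℂ)⁻¹ := by push_cast; rfl
    rw [hspec, ← hc, ← EAux.M_const hU ((dS:ℝ)⁻¹), EAux.M_sub]
  have hχ2 : χ = ∑ i, |δ i| := by
    rw [hχ, hD, EAux.M_traceNorm hU]
  have hχ0 : 0 ≤ χ := by
    rw [hχ2]; positivity
  have hδsum : ∑ i, δ i = 0 := by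
    have h1 : ∑ i, δ i = (∑ i, μ i) - (dS:ℝ) * (dS:ℝ)⁻¹ := by
      rw [hδdef, Finset.sum_sub_distrib, Finset.sum_const, Finset.card_univ, Fintype.card_fin,
        nsmul_eq_mul]
    rw [h1, hsum, mul_inv_cancel₀ (ne_of_gt hdS0)]
    ring
  have hδb : ∀ i, |δ i| ≤ χ / 2 := by
    intro i
    have h1 : δ i + ∑ j ∈ Finset.univ.erase i, δ j = 0 := by
      rw [Finset.add_sum_erase _ _ (Finset.mem_univ i)]
      exact hδsum
    have h2 : |δ i| = |∑ j ∈ Finset.univ.erase i, δ j| := by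
      rw [show ∑ j ∈ Finset.univ.erase i, δ j = -δ i by linarith, abs_neg]
    have h3 : |∑ j ∈ Finset.univ.erase i, δ j| ≤ ∑ j ∈ Finset.univ.erase i, |δ j| :=
      Finset.abs_sum_le_sum_abs _ _
    have h4 : |δ i| + ∑ j ∈ Finset.univ.erase i, |δ j| = ∑ j, |δ j| :=
      Finset.add_sum_erase Finset.univ (fun j => |δ j|) (Finset.mem_univ i)
    rw [hχ2]
    linarith
  have hμlow : ∀ i, (2 * (dS:ℝ))⁻¹ ≤ μ i := by
    intro i
    have h2 := abs_le.mp (hδb i)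
    have h3 : μ i = (dS:ℝ)⁻¹ + δ i := by rw [hδdef]; ring
    have hsm : χ ≤ (dS:ℝ)⁻¹ := by rw [← one_div]; exact hsmall
    have h5 : (2 * (dS:ℝ))⁻¹ = (dS:ℝ)⁻¹ / 2 := by
      rw [mul_comm, mul_inv]; ring
    linarith
  constructor
  · have hpart : ρS = EAux.M U (fun _ => (2*(dS:ℝ))⁻¹)
        + EAux.M U (fun i => μ i - (2*(dS:ℝ))⁻¹) := by
      rw [EAux.M_add, hspec]
      refine congrArg (EAux.M U) (funext fun i => ?_)
      ring
    rw [hpart, EAux.M_const hU]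
    refine Matrix.PosDef.add_posSemidef ?_
      (EAux.M_posSemidef hU fun i => by linarith [hμlow i])
    have h1 : (((2*(dS:ℝ))⁻¹ : ℝ) : ℂ) • (1 : Matrix (Fin dS) (Fin dS) ℂ)
        = Matrix.diagonal (fun _ => (((2*(dS:ℝ))⁻¹ : ℝ) : ℂ)) := by
      rw [← Matrix.diagonal_one, ← Matrix.diagonal_smul]
      refine congrArg Matrix.diagonal (funext fun i => ?_)
      simp
    rw [h1]
    refine Matrix.PosDef.diagonal fun i => ?_
    rw [Complex.zero_lt_real]
    positivity
  · intro H hH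
    set c := Real.logb 2 ((dS:ℝ)⁻¹) with hcdef
    have hL : matLog2 ρS = EAux.M U (fun i => Real.logb 2 (μ i)) := dif_pos hher
    set ℓ : Fin dS → ℝ := fun i => Real.logb 2 (μ i) - c with hℓdef
    have hlb : ∀ i, |ℓ i| ≤ (dS:ℝ) * χ := by
      intro i
      have hμpos : 0 < μ i := lt_of_lt_of_le (by positivity) (hμlow i)
      have harg : Real.logb 2 (μ i) - c = Real.logb 2 (1 + ((dS:ℝ) * μ i - 1)) := by
        rw [hcdef, ← Real.logb_div (ne_of_gt hμpos) (by positivity : ((dS:ℝ)⁻¹) ≠ 0)]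
        congr 1
        field_simp
        ring
      have ht : |(dS:ℝ) * μ i - 1| ≤ (dS:ℝ) * χ / 2 := by
        have h6 : (dS:ℝ) * μ i - 1 = (dS:ℝ) * δ i := by
          rw [hδdef]
          field_simp
        rw [h6, abs_mul, abs_of_pos hdS0]
        have h7 := hδb i
        nlinarith
      have ht2 : |(dS:ℝ) * μ i - 1| ≤ 1/2 := by
        have hsm2 : (dS:ℝ) * χ ≤ 1 := by
          have h8 : χ ≤ 1/(dS:ℝ) := hsmall
          calc (dS:ℝ) * χ ≤ (dS:ℝ) * (1/(dS:ℝ)) :=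
                mul_le_mul_of_nonneg_left h8 (le_of_lt hdS0)
            _ = 1 := by field_simp
        linarith
      have h9 := EAux.logb_bound ht2
      calc |ℓ i| = |Real.logb 2 (1 + ((dS:ℝ) * μ i - 1))| := by
            show |Real.logb 2 (μ i) - c| = _
            rw [harg]
        _ ≤ 2 * |(dS:ℝ) * μ i - 1| := h9
        _ ≤ 2 * ((dS:ℝ) * χ / 2) := by linarith
        _ = (dS:ℝ) * χ := by ring
    set B := (matLog2 ρS - ((c:ℝ):ℂ) • 1) ⊗ₖ (1 : Matrix (Fin dE) (Fin dE) ℂ) with hBdef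
    have hBM : B = EAux.M (U ⊗ₖ (1 : Matrix (Fin dE) (Fin dE) ℂ)) (fun p => ℓ p.1) := by
      rw [hBdef, hL, ← EAux.M_const hU c, EAux.M_sub, EAux.M_kron]
    have hUk : U ⊗ₖ (1 : Matrix (Fin dE) (Fin dE) ℂ) ∈ Matrix.unitaryGroup (Fin dS × Fin dE) ℂ :=
      EAux.kron_unitary hU EAux.one_unitary
    have hBop : opNorm B ≤ (dS:ℝ) * χ := by
      rw [hBM]
      exact EAux.M_opNorm hUk (by positivity) (fun p => hlb p.1)
    have key : ∀ l : ℝ, ‖Matrix.trace (H *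
        mcomm (matLog2 ρS ⊗ₖ (1 : Matrix (Fin dE) (Fin dE) ℂ)) ρSE)‖
        ≤ 2 * opNorm (H - ((l:ℝ):ℂ) • 1) * ((dS:ℝ) * χ) := by
      intro l
      set H' := H - ((l:ℝ):ℂ) • 1 with hH'def
      have hH' : H'.IsHermitian := by
        rw [hH'def]
        refine hH.sub ?_
        rw [Matrix.IsHermitian, Matrix.conjTranspose_smul, Matrix.conjTranspose_one,
          RCLike.star_def, Complex.conj_ofReal]
      set X := matLog2 ρS ⊗ₖ (1 : Matrix (Fin dE) (Fin dE) ℂ) with hXdef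
      have hXB : X - ((c:ℝ):ℂ) • 1 = B := by
        rw [hBdef, EAux.kron_sub, hXdef]
        have h10 : (((c:ℝ):ℂ) • (1 : Matrix (Fin dS) (Fin dS) ℂ)) ⊗ₖ
            (1 : Matrix (Fin dE) (Fin dE) ℂ) = ((c:ℝ):ℂ) • 1 := by
          rw [Matrix.smul_kronecker, Matrix.one_kronecker_one]
        rw [h10]
      have tid : Matrix.trace (H * mcomm X ρSE)
          = Matrix.trace (B * (ρSE * H' - H' * ρSE)) := by
        rw [EAux.trace_rearrange H X ρSE ((l:ℝ):ℂ) ((c:ℝ):ℂ), hXB, hH'def]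
      rw [tid]
      set Z := Complex.I • (ρSE * H' - H' * ρSE) with hZdef
      have hZrw : ρSE * H' - H' * ρSE = (-Complex.I) • Z := by
        rw [hZdef, smul_smul]
        simp [Complex.I_mul_I]
      have hZ : Z.IsHermitian := by
        rw [hZdef, Matrix.IsHermitian, Matrix.conjTranspose_smul, Matrix.conjTranspose_sub,
          Matrix.conjTranspose_mul, Matrix.conjTranspose_mul, hρ.1, hH']
        simp only [RCLike.star_def, Complex.conj_I, neg_smul, smul_sub, neg_sub]
        abel
      have h11 : Matrix.trace (B * (ρSE * H' - H' * ρSE))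
          = (-Complex.I) * Matrix.trace (B * Z) := by
        rw [hZrw, Matrix.mul_smul, Matrix.trace_smul, smul_eq_mul]
      have h12 : ‖Matrix.trace (B * (ρSE * H' - H' * ρSE))‖
          = ‖Matrix.trace (B * Z)‖ := by
        rw [h11, norm_mul]
        simp
      rw [h12]
      calc ‖Matrix.trace (B * Z)‖ ≤ opNorm B * traceNorm Z := EAux.holder B Z hZ
        _ ≤ ((dS:ℝ) * χ) * (2 * opNorm H') := by
            refine mul_le_mul hBop (EAux.traceNorm_comm_le hρ htr hH')
              (EAux.traceNorm_nonneg_herm hZ) (by positivity)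
        _ = 2 * opNorm H' * ((dS:ℝ) * χ) := by ring
    have hbdd : BddBelow (Set.range fun l : ℝ => opNorm (H - ((l:ℝ):ℂ) •
        (1 : Matrix (Fin dS × Fin dE) (Fin dS × Fin dE) ℂ))) := by
      refine ⟨0, ?_⟩
      rintro x ⟨l, rfl⟩
      exact norm_nonneg _
    rcases eq_or_lt_of_le hχ0 with hz | hz
    · rw [← hz]
      have h13 := key 0
      rw [← hz] at h13
      simpa using h13
    · have hc2 : 0 < 2 * ((dS:ℝ) * χ) := by positivity
      set T := ‖Matrix.trace (H *
        mcomm (matLog2 ρS ⊗ₖ (1 : Matrix (Fin dE) (Fin dE) ℂ)) ρSE)‖ with hTdef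
      have hI0ge : T / (2 * ((dS:ℝ) * χ))
          ≤ ⨅ l : ℝ, opNorm (H - ((l:ℝ):ℂ) • 1) := by
        refine le_ciInf fun l => ?_
        rw [div_le_iff₀ hc2]
        calc T ≤ 2 * opNorm (H - ((l:ℝ):ℂ) • 1) * ((dS:ℝ) * χ) := key l
          _ = opNorm (H - ((l:ℝ):ℂ) • 1) * (2 * ((dS:ℝ) * χ)) := by ring
      have h14 := (div_le_iff₀ hc2).mp hI0ge
      calc T ≤ (⨅ l : ℝ, opNorm (H - ((l:ℝ):ℂ) • 1)) * (2 * ((dS:ℝ) * χ)) := h14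
        _ = (2 * ⨅ l : ℝ, opNorm (H - ((l:ℝ):ℂ) • 1)) * (dS:ℝ) * χ := by ring
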